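/- With A_a the generator of the delay-equation semigroup for x'(t) = a x(t−1) on X = C([−1,0],ℝ), the Yosida distance satisfies d_Y(A_a, A_b) ≤ 2|a − b| for all reals a, b, where d_Y(A_a,A_b) = limsup_{λ→∞} sup_{‖ψ‖≤1} sup_{t∈[−1,0]} λ²|((R(λ,A_a) − R(λ,A_b))ψ)(t)|. -/

import Mathlib

open Filter Topology intervalIntegral

/-- For the generators `A_a`, `A_b` of the delay-equation semigroups for
`x'(t) = c x(t−1)` on `X = C([−1,0],ℝ)`, the Yosida distance satisfies
`d_Y(A_a, A_b) ≤ 2|a − b|`, where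
`d_Y(A_a,A_b) = limsup_{λ→∞} sup_{‖ψ‖≤1} sup_{t∈[−1,0]} λ²|((R(λ,A_a) − R(λ,A_b))ψ)(t)|`
and, by the explicit resolvent formula,
`((R(λ,A_a) − R(λ,A_b))ψ)(t) = (λ∫_{−1}^0 e^{−λs}ψ(s)ds + ψ(0))·(1/(λ−ae^{−λ}) − 1/(λ−be^{−λ}))·e^{λt}`. -/
theorem yosida_stmt18 (a b : ℝ) :
    Filter.limsup (fun lam : ℝ =>
      sSup {r : ℝ | ∃ ψ : ℝ → ℝ,
        ContinuousOn ψ (Set.Icc (-1 : ℝ) 0) ∧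
        (∀ t ∈ Set.Icc (-1 : ℝ) 0, |ψ t| ≤ 1) ∧
        ∃ t ∈ Set.Icc (-1 : ℝ) 0,
          r = lam ^ 2 *
            |((lam * ∫ s in (-1 : ℝ)..0, Real.exp (-lam * s) * ψ s) + ψ 0)
              * (1 / (lam - a * Real.exp (-lam)) - 1 / (lam - b * Real.exp (-lam)))
              * Real.exp (lam * t)|}) atTop
    ≤ 2 * |a - b| := by
  have hC : (0:ℝ) ≤ 2 * |a - b| := by positivity
  have hev : ∀ᶠ lam : ℝ in atTop,
      ∀ r ∈ {r : ℝ | ∃ ψ : ℝ → ℝ,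
        ContinuousOn ψ (Set.Icc (-1 : ℝ) 0) ∧
        (∀ t ∈ Set.Icc (-1 : ℝ) 0, |ψ t| ≤ 1) ∧
        ∃ t ∈ Set.Icc (-1 : ℝ) 0,
          r = lam ^ 2 *
            |((lam * ∫ s in (-1 : ℝ)..0, Real.exp (-lam * s) * ψ s) + ψ 0)
              * (1 / (lam - a * Real.exp (-lam)) - 1 / (lam - b * Real.exp (-lam)))
              * Real.exp (lam * t)|}, r ≤ 2 * |a - b| := by
    filter_upwards [eventually_ge_atTop (max 4 (max |a| |b|))] with lam hlam
    have hl4 : (4:ℝ) ≤ lam := le_trans (le_max_left _ _) hlam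
    have hla : |a| ≤ lam := le_trans (le_trans (le_max_left _ _) (le_max_right _ _)) hlam
    have hlb : |b| ≤ lam := le_trans (le_trans (le_max_right _ _) (le_max_right _ _)) hlam
    have hl0 : (0:ℝ) < lam := by linarith
    have hexp : lam ≤ Real.exp lam := (Real.add_one_le_exp lam).trans' (by linarith)
    have hexp0 : (0:ℝ) < Real.exp (-lam) := Real.exp_pos _
    -- a * exp(-lam) ≤ 1 in abs
    have key : ∀ c : ℝ, |c| ≤ lam → |c * Real.exp (-lam)| ≤ 1 := by
      intro c hc
      rw [abs_mul, abs_of_pos hexp0]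
      have h1 : Real.exp lam * Real.exp (-lam) = 1 := by
        rw [← Real.exp_add]; simp
      calc |c| * Real.exp (-lam) ≤ Real.exp lam * Real.exp (-lam) := by
            gcongr; exact hc.trans hexp
        _ = 1 := h1
    have hxa : lam - 1 ≤ lam - a * Real.exp (-lam) := by
      have := key a hla
      have := abs_le.mp this
      linarith [this.1, this.2]
    have hxb : lam - 1 ≤ lam - b * Real.exp (-lam) := by
      have := key b hlb
      have := abs_le.mp this
      linarith [this.1, this.2]
    have hx0 : (0:ℝ) < lam - a * Real.exp (-lam) := by linarith
    have hy0 : (0:ℝ) < lam - b * Real.exp (-lam) := by linarith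
    rintro r ⟨ψ, hψc, hψb, t, ht, rfl⟩
    -- bound the integral
    have hintexp : ∫ s in (-1:ℝ)..0, Real.exp (-lam * s)
        = (Real.exp lam - 1) / lam := by
      have := intervalIntegral.integral_comp_mul_left (a := (-1:ℝ)) (b := 0)
        (fun x => Real.exp x) (c := -lam) (by simpa using hl0.ne')
      simp only [mul_zero, mul_neg, mul_one, neg_neg, integral_exp,
        smul_eq_mul, Real.exp_zero] at this
      rw [this]
      rw [inv_neg, neg_mul, ← mul_neg, neg_sub, eq_div_iff hl0.ne', mul_comm lam⁻¹,
        mul_assoc, inv_mul_cancel₀ hl0.ne', mul_one]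
    have hint1 : IntervalIntegrable (fun s => Real.exp (-lam * s) * ψ s)
        MeasureTheory.volume (-1) 0 := by
      apply ContinuousOn.intervalIntegrable
      apply ContinuousOn.mul (Continuous.continuousOn (by continuity))
      rwa [Set.uIcc_of_le (by norm_num : (-1:ℝ) ≤ 0)]
    have hint2 : IntervalIntegrable (fun s => Real.exp (-lam * s))
        MeasureTheory.volume (-1) 0 :=
      (Continuous.continuousOn (by continuity)).intervalIntegrable
    have hIbound : |∫ s in (-1:ℝ)..0, Real.exp (-lam * s) * ψ s|
        ≤ (Real.exp lam - 1) / lam := by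
      calc |∫ s in (-1:ℝ)..0, Real.exp (-lam * s) * ψ s|
          ≤ ∫ s in (-1:ℝ)..0, |Real.exp (-lam * s) * ψ s| :=
            intervalIntegral.abs_integral_le_integral_abs (by norm_num)
        _ ≤ ∫ s in (-1:ℝ)..0, Real.exp (-lam * s) := by
            apply intervalIntegral.integral_mono_on (by norm_num) hint1.abs hint2
            intro x hx
            rw [abs_mul, abs_of_pos (Real.exp_pos _)]
            calc Real.exp (-lam * x) * |ψ x| ≤ Real.exp (-lam * x) * 1 := by
                  gcongr; exact hψb x hx
              _ = Real.exp (-lam * x) := mul_one _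
        _ = (Real.exp lam - 1) / lam := hintexp
    have hfirst : |(lam * ∫ s in (-1:ℝ)..0, Real.exp (-lam * s) * ψ s) + ψ 0|
        ≤ Real.exp lam := by
      have h0 : |ψ 0| ≤ 1 := hψb 0 (by norm_num)
      calc |(lam * ∫ s in (-1:ℝ)..0, Real.exp (-lam * s) * ψ s) + ψ 0|
          ≤ |lam * ∫ s in (-1:ℝ)..0, Real.exp (-lam * s) * ψ s| + |ψ 0| := abs_add_le _ _
        _ ≤ lam * ((Real.exp lam - 1) / lam) + 1 := by
            rw [abs_mul, abs_of_pos hl0]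
            gcongr
        _ = Real.exp lam := by field_simp; ring
    -- bound the resolvent difference
    have hdiff : |1 / (lam - a * Real.exp (-lam)) - 1 / (lam - b * Real.exp (-lam))|
        ≤ 2 * |a - b| * Real.exp (-lam) / lam ^ 2 := by
      have heq : 1 / (lam - a * Real.exp (-lam)) - 1 / (lam - b * Real.exp (-lam))
          = (a - b) * Real.exp (-lam)
            / ((lam - a * Real.exp (-lam)) * (lam - b * Real.exp (-lam))) := by
        rw [div_sub_div _ _ hx0.ne' hy0.ne']
        ring
      rw [heq, abs_div, abs_mul, abs_of_pos hexp0,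
        abs_of_pos (mul_pos hx0 hy0), div_le_div_iff₀ (mul_pos hx0 hy0) (by positivity)]
      have hsq : lam ^ 2 ≤ 2 * ((lam - 1) * (lam - 1)) := by nlinarith
      calc |a - b| * Real.exp (-lam) * lam ^ 2
          ≤ |a - b| * Real.exp (-lam) * (2 * ((lam - 1) * (lam - 1))) := by
            gcongr
        _ = 2 * |a - b| * Real.exp (-lam) * ((lam - 1) * (lam - 1)) := by ring
        _ ≤ 2 * |a - b| * Real.exp (-lam)
            * ((lam - a * Real.exp (-lam)) * (lam - b * Real.exp (-lam))) := by
            gcongr <;> linarith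
    have hexpt : Real.exp (lam * t) ≤ 1 := by
      rw [Real.exp_le_one_iff]
      exact mul_nonpos_of_nonneg_of_nonpos hl0.le ht.2
    calc lam ^ 2 * |((lam * ∫ s in (-1:ℝ)..0, Real.exp (-lam * s) * ψ s) + ψ 0)
            * (1 / (lam - a * Real.exp (-lam)) - 1 / (lam - b * Real.exp (-lam)))
            * Real.exp (lam * t)|
        = lam ^ 2 * (|(lam * ∫ s in (-1:ℝ)..0, Real.exp (-lam * s) * ψ s) + ψ 0|
            * |1 / (lam - a * Real.exp (-lam)) - 1 / (lam - b * Real.exp (-lam))|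
            * Real.exp (lam * t)) := by
          rw [abs_mul, abs_mul, abs_of_pos (Real.exp_pos _)]
      _ ≤ lam ^ 2 * (Real.exp lam * (2 * |a - b| * Real.exp (-lam) / lam ^ 2) * 1) := by
          gcongr
      _ = 2 * |a - b| * (Real.exp lam * Real.exp (-lam)) := by
          field_simp
      _ = 2 * |a - b| := by
          rw [← Real.exp_add]
          simp
  have hev' : ∀ᶠ lam : ℝ in atTop,
      sSup {r : ℝ | ∃ ψ : ℝ → ℝ,
        ContinuousOn ψ (Set.Icc (-1 : ℝ) 0) ∧
        (∀ t ∈ Set.Icc (-1 : ℝ) 0, |ψ t| ≤ 1) ∧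
        ∃ t ∈ Set.Icc (-1 : ℝ) 0,
          r = lam ^ 2 *
            |((lam * ∫ s in (-1 : ℝ)..0, Real.exp (-lam * s) * ψ s) + ψ 0)
              * (1 / (lam - a * Real.exp (-lam)) - 1 / (lam - b * Real.exp (-lam)))
              * Real.exp (lam * t)|} ≤ 2 * |a - b| := by
    filter_upwards [hev] with lam h
    exact Real.sSup_le h hC
  apply Filter.limsup_le_of_le _ hev'
  apply Filter.isCoboundedUnder_le_of_eventually_le atTop (x := 0)
  filter_upwards [hev] with lam hb
  apply le_csSup ⟨2 * |a - b|, hb⟩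
  refine ⟨fun _ => 0, continuousOn_const, fun t _ => by norm_num, 0, by norm_num, ?_⟩
  simp
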